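/- On the complete graph K_N with r > 0, let x* be the two-valued detailed-balance stationary state determined by a subset of V nodes at value √r and N−V nodes at value 0. The eigenvalues of the Jacobian J(x*) = r(Q= − 2Q≠) are: 0 (multiplicity 1, constant vector), −2rN (multiplicity 1), −3r(V − N/3) with multiplicity N−V−1, and 3r(V − 2N/3) with multiplicity V−1. Hence x* is linearly stable if N/3 < V < 2N/3 and linearly unstable if V < N/3 or V > 2N/3. -/

import Mathlib

open Finset Matrix Polynomial
open scoped Classical

/-- Right-hand side of the dynamics `dx_i/dt = Σ_{j~i} (r(x_i-x_j) - (x_i-x_j)^3)`. -/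
noncomputable def rhs {N : ℕ} (G : SimpleGraph (Fin N)) (r : ℝ) (x : Fin N → ℝ) (i : Fin N) : ℝ :=
  ∑ j ∈ G.neighborFinset i, (r * (x i - x j) - (x i - x j) ^ 3)

/-- Graph Laplacian matrix. -/
noncomputable def lap {N : ℕ} (G : SimpleGraph (Fin N)) : Matrix (Fin N) (Fin N) ℝ :=
  fun i j => if i = j then (G.degree i : ℝ) else if G.Adj i j then -1 else 0

/-- Laplacian of the subgraph of consensus edges (edges with `x i = x j`). -/
noncomputable def lapEq {N : ℕ} (G : SimpleGraph (Fin N)) (x : Fin N → ℝ) :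
    Matrix (Fin N) (Fin N) ℝ :=
  fun i j => if i = j then (((G.neighborFinset i).filter (fun k => x i = x k)).card : ℝ)
    else if G.Adj i j ∧ x i = x j then -1 else 0

/-- Laplacian of the subgraph of dissensus edges (edges with `x i ≠ x j`). -/
noncomputable def lapNe {N : ℕ} (G : SimpleGraph (Fin N)) (x : Fin N → ℝ) :
    Matrix (Fin N) (Fin N) ℝ :=
  fun i j => if i = j then (((G.neighborFinset i).filter (fun k => x i ≠ x k)).card : ℝ)
    else if G.Adj i j ∧ x i ≠ x j then -1 else 0

/-- `Qp` is the Moore–Penrose pseudoinverse of `Q`. -/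
def IsMP {N : ℕ} (Q Qp : Matrix (Fin N) (Fin N) ℝ) : Prop :=
  Q * Qp * Q = Q ∧ Qp * Q * Qp = Qp ∧ (Q * Qp)ᵀ = Q * Qp ∧ (Qp * Q)ᵀ = Qp * Q

/-- The indicator difference vector `e_i - e_j`. -/
noncomputable def ev {N : ℕ} (i j : Fin N) : Fin N → ℝ := Pi.single i 1 - Pi.single j 1

/-- Effective resistance `ω_ij = (e_i-e_j)ᵀ Q⁺ (e_i-e_j)` given a pseudoinverse `Qp` of `Q`. -/
noncomputable def effRes {N : ℕ} (Qp : Matrix (Fin N) (Fin N) ℝ) (i j : Fin N) : ℝ :=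
  ev i j ⬝ᵥ (Qp *ᵥ ev i j)

/-- A detailed-balance state: every edge difference lies in `{0, √r, -√r}`. -/
def DetailedBalance {N : ℕ} (G : SimpleGraph (Fin N)) (r : ℝ) (x : Fin N → ℝ) : Prop :=
  ∀ i j, G.Adj i j → (x i - x j = 0 ∨ x i - x j = Real.sqrt r ∨ x i - x j = - Real.sqrt r)

/-- `M` is negative definite on the subspace orthogonal to the constant vector. -/
def NegDefOrth {N : ℕ} (M : Matrix (Fin N) (Fin N) ℝ) : Prop :=
  ∀ z : Fin N → ℝ, z ≠ 0 → ∑ k, z k = 0 → z ⬝ᵥ (M *ᵥ z) < 0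

/-- `M` has a positive eigenvalue. -/
def HasPosEig {N : ℕ} (M : Matrix (Fin N) (Fin N) ℝ) : Prop :=
  ∃ (μ : ℝ) (z : Fin N → ℝ), 0 < μ ∧ z ≠ 0 ∧ M *ᵥ z = μ • z

/-- The Jacobian of the dynamics `rhs` at a state `x`, defined entrywise via partial
derivatives. -/
noncomputable def jac {N : ℕ} (G : SimpleGraph (Fin N)) (r : ℝ) (x : Fin N → ℝ) :
    Matrix (Fin N) (Fin N) ℝ :=
  fun i j => deriv (fun t => rhs G r (Function.update x j t) i) (x j)

/-- The solution `α(t) = α₀ (α₀² - (α₀²-1) e^{-2μrt})^{-1/2}` of the Bernoulli ODE. -/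
noncomputable def alph (a0 mu r : ℝ) (t : ℝ) : ℝ :=
  a0 / Real.sqrt (a0 ^ 2 - (a0 ^ 2 - 1) * Real.exp (-(2 * mu * r * t)))

noncomputable def ind {N : ℕ} (S : Finset (Fin N)) : Fin N → ℝ := fun i => if i ∈ S then 1 else 0

noncomputable def modelM {N : ℕ} (S : Finset (Fin N)) : Matrix (Fin N) (Fin N) ℝ :=
  Matrix.diagonal (fun i => if i ∈ S then 3*(S.card:ℝ) - 2*N else (N:ℝ) - 3*S.card)
    - Matrix.vecMulVec (fun _ => (1:ℝ)) (fun _ => 1)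
    + (3:ℝ) • (Matrix.vecMulVec (ind S) (ind Sᶜ) + Matrix.vecMulVec (ind Sᶜ) (ind S))

lemma nb_top {N : ℕ} (i : Fin N) {inst : Fintype ((⊤ : SimpleGraph (Fin N)).neighborSet i)} :
    @SimpleGraph.neighborFinset (Fin N) (⊤ : SimpleGraph (Fin N)) i inst =
      Finset.univ.erase i := by
  ext k; simp [SimpleGraph.mem_neighborFinset, eq_comm]

lemma M0_eq {N : ℕ} {r : ℝ} (hr : 0 < r) (S : Finset (Fin N)) :
    lapEq (⊤ : SimpleGraph (Fin N)) (fun i => if i ∈ S then Real.sqrt r else 0) -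
      (2:ℝ) • lapNe (⊤ : SimpleGraph (Fin N)) (fun i => if i ∈ S then Real.sqrt r else 0) =
    modelM S := by
  have hs : Real.sqrt r ≠ 0 := (Real.sqrt_pos.mpr hr).ne'
  set x : Fin N → ℝ := fun i => if i ∈ S then Real.sqrt r else 0 with hx
  have hxe : ∀ i j, x i = x j ↔ (i ∈ S ↔ j ∈ S) := by
    intro i j; simp only [hx]
    split_ifs with h1 h2 h2 <;> simp [h1, h2, hs, hs.symm]
  have hScN : S.card ≤ N := by simpa using Finset.card_le_card (Finset.subset_univ S)
  have hcc : Sᶜ.card = N - S.card := by simp [Finset.card_compl]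
  ext i j
  by_cases hij : i = j
  · subst hij
    have h1 : ((Finset.univ.erase i).filter (fun k => x i = x k)) =
        (if i ∈ S then S else Sᶜ).erase i := by
      ext k
      by_cases hiS : i ∈ S <;>
        simp [Finset.mem_erase, hxe, hiS, and_comm, eq_comm (a := k)]
    have h2 : ((Finset.univ.erase i).filter (fun k => ¬ x i = x k)) =
        (if i ∈ S then Sᶜ else S) := by
      ext k
      by_cases hiS : i ∈ S <;> by_cases hk : k = i <;>
        simp [Finset.mem_erase, hxe, hiS, hk]
    simp only [lapEq, lapNe, Ne, nb_top, h1, h2, if_pos rfl, Matrix.sub_apply,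
      Matrix.smul_apply, smul_eq_mul]
    by_cases hiS : i ∈ S
    · have hSc : 1 ≤ S.card := Finset.card_pos.mpr ⟨i, hiS⟩
      simp only [if_pos hiS, Finset.card_erase_of_mem hiS, hcc]
      simp [modelM, hiS, Matrix.vecMulVec_apply, ind]
      push_cast [hSc, hScN]
      ring
    · have hiSc : i ∈ Sᶜ := by simpa using hiS
      have hSc : 1 ≤ Sᶜ.card := Finset.card_pos.mpr ⟨i, hiSc⟩
      have h1N : 1 ≤ N - S.card := by rw [hcc] at hSc; omega
      simp only [if_neg hiS, Finset.card_erase_of_mem hiSc, hcc]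
      simp [modelM, hiS, Matrix.vecMulVec_apply, ind]
      push_cast [hScN, h1N]
      ring
  · have htop : (⊤ : SimpleGraph (Fin N)).Adj i j := by simpa using hij
    simp only [lapEq, lapNe, Ne, if_neg hij, Matrix.sub_apply, Matrix.smul_apply, smul_eq_mul,
      htop, true_and, hxe i j]
    by_cases hiS : i ∈ S <;> by_cases hjS : j ∈ S <;>
      simp [modelM, hij, Matrix.diagonal_apply_ne _ hij, Matrix.vecMulVec_apply, ind,
          hiS, hjS] <;> norm_num

lemma vecMulVec_mulVec {N : ℕ} (a b z : Fin N → ℝ) :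
    Matrix.vecMulVec a b *ᵥ z = (b ⬝ᵥ z) • a := by
  ext k
  simp [Matrix.vecMulVec_apply, Matrix.mulVec, dotProduct, Finset.mul_sum, mul_comm,
    mul_assoc, mul_left_comm]

lemma ind_dot {N : ℕ} (S : Finset (Fin N)) (z : Fin N → ℝ) :
    ind S ⬝ᵥ z = ∑ k ∈ S, z k := by
  simp [ind, dotProduct, Finset.sum_ite_mem, Finset.univ_inter, ite_mul]

lemma ones_dot {N : ℕ} (z : Fin N → ℝ) : (fun _ : Fin N => (1:ℝ)) ⬝ᵥ z = ∑ k, z k := by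
  simp [dotProduct]

lemma dot_ind {N : ℕ} (S : Finset (Fin N)) (z : Fin N → ℝ) :
    z ⬝ᵥ ind S = ∑ k ∈ S, z k := by
  rw [dotProduct_comm, ind_dot]

lemma modelM_quadform {N : ℕ} (S : Finset (Fin N)) (z : Fin N → ℝ) (hsum : ∑ k, z k = 0) :
    z ⬝ᵥ (modelM S *ᵥ z) =
      (∑ k, (if k ∈ S then 3*(S.card:ℝ) - 2*N else (N:ℝ) - 3*S.card) * z k ^ 2)
        - 6 * (∑ k ∈ S, z k) ^ 2 := by
  have hcs : ∑ k ∈ Sᶜ, z k = - ∑ k ∈ S, z k := by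
    have := Finset.sum_add_sum_compl S z
    rw [hsum] at this; linarith
  simp only [modelM, Matrix.sub_mulVec, Matrix.add_mulVec, Matrix.smul_mulVec,
    _root_.vecMulVec_mulVec, ind_dot, ones_dot, hsum, dotProduct_sub, dotProduct_add,
    dotProduct_smul, hcs, zero_smul, dotProduct_zero, dot_ind, smul_eq_mul,
    smul_smul]
  have hdiag : z ⬝ᵥ (Matrix.diagonal
      (fun i => if i ∈ S then 3*(S.card:ℝ) - 2*N else (N:ℝ) - 3*S.card) *ᵥ z) =
      ∑ k, (if k ∈ S then 3*(S.card:ℝ) - 2*N else (N:ℝ) - 3*S.card) * z k ^ 2 := by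
    simp [dotProduct, Matrix.mulVec_diagonal]
    exact Finset.sum_congr rfl fun k _ => by ring
  rw [hdiag]
  ring

-- eigenvector lemma: pair inside S or inside Sᶜ
lemma modelM_pair_S {N : ℕ} (S : Finset (Fin N)) {i j : Fin N} (hij : i ≠ j)
    (hi : i ∈ S) (hj : j ∈ S) :
    modelM S *ᵥ (Pi.single i 1 - Pi.single j 1) =
      (3*(S.card:ℝ) - 2*N) • (Pi.single i 1 - Pi.single j 1) := by
  set z : Fin N → ℝ := Pi.single i 1 - Pi.single j 1 with hz
  have hdot : ∀ w : Fin N → ℝ, w ⬝ᵥ z = w i - w j := by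
    intro w; simp [hz, dotProduct_sub, dotProduct_single]
  have h1 : (fun _ : Fin N => (1:ℝ)) ⬝ᵥ z = 0 := by rw [hdot]; ring
  have h2 : ind S ⬝ᵥ z = 0 := by rw [hdot]; simp [ind, hi, hj]
  have h3 : ind Sᶜ ⬝ᵥ z = 0 := by rw [hdot]; simp [ind, hi, hj]
  simp only [modelM, Matrix.sub_mulVec, Matrix.add_mulVec, Matrix.smul_mulVec,
    _root_.vecMulVec_mulVec, h1, h2, h3, zero_smul, sub_zero, add_zero, smul_zero]
  funext k
  by_cases hk : k = i
  · subst hk; simp [Matrix.mulVec_diagonal, hi, hz, Pi.single_apply, hij, (Ne.symm hij)]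
  · by_cases hk2 : k = j
    · subst hk2; simp [Matrix.mulVec_diagonal, hj, hz, Pi.single_apply, hij, (Ne.symm hij)]
    · simp [Matrix.mulVec_diagonal, hz, Pi.single_apply, hk, hk2]

lemma modelM_pair_Sc {N : ℕ} (S : Finset (Fin N)) {i j : Fin N} (hij : i ≠ j)
    (hi : i ∉ S) (hj : j ∉ S) :
    modelM S *ᵥ (Pi.single i 1 - Pi.single j 1) =
      ((N:ℝ) - 3*S.card) • (Pi.single i 1 - Pi.single j 1) := by
  set z : Fin N → ℝ := Pi.single i 1 - Pi.single j 1 with hz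
  have hdot : ∀ w : Fin N → ℝ, w ⬝ᵥ z = w i - w j := by
    intro w; simp [hz, dotProduct_sub, dotProduct_single]
  have h1 : (fun _ : Fin N => (1:ℝ)) ⬝ᵥ z = 0 := by rw [hdot]; ring
  have h2 : ind S ⬝ᵥ z = 0 := by rw [hdot]; simp [ind, hi, hj]
  have h3 : ind Sᶜ ⬝ᵥ z = 0 := by rw [hdot]; simp [ind, hi, hj]
  simp only [modelM, Matrix.sub_mulVec, Matrix.add_mulVec, Matrix.smul_mulVec,
    _root_.vecMulVec_mulVec, h1, h2, h3, zero_smul, sub_zero, add_zero, smul_zero]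
  funext k
  by_cases hk : k = i
  · subst hk; simp [Matrix.mulVec_diagonal, hi, hz, Pi.single_apply, hij, (Ne.symm hij)]
  · by_cases hk2 : k = j
    · subst hk2; simp [Matrix.mulVec_diagonal, hj, hz, Pi.single_apply, hij, (Ne.symm hij)]
    · simp [Matrix.mulVec_diagonal, hz, Pi.single_apply, hk, hk2]

lemma pair_ne_zero {N : ℕ} {i j : Fin N} (hij : i ≠ j) :
    (Pi.single i 1 - Pi.single j 1 : Fin N → ℝ) ≠ 0 := by
  intro h
  have := congrFun h i
  simp [Pi.single_apply, hij, Ne.symm hij] at this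

lemma modelM_diag {N : ℕ} (S : Finset (Fin N)) (i : Fin N) :
    modelM S i i = (if i ∈ S then 3*(S.card:ℝ) - 2*N else (N:ℝ) - 3*S.card) - 1 := by
  by_cases hiS : i ∈ S <;> simp [modelM, Matrix.vecMulVec_apply, ind, hiS]

lemma modelM_off {N : ℕ} (S : Finset (Fin N)) {i j : Fin N} (hij : i ≠ j) :
    modelM S i j = if (i ∈ S ↔ j ∈ S) then -1 else 2 := by
  by_cases hiS : i ∈ S <;> by_cases hjS : j ∈ S <;>
    simp [modelM, Matrix.vecMulVec_apply, ind, hiS, hjS, Matrix.diagonal_apply_ne _ hij] <;>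
    norm_num

section CharP
variable {N : ℕ} (r : ℝ) (S : Finset (Fin N))

noncomputable def aP : Polynomial ℝ := X - C (r*(3*(S.card:ℝ) - 2*N))
noncomputable def bP : Polynomial ℝ := X - C (r*((N:ℝ) - 3*S.card))

noncomputable def UP : Matrix (Fin N) (Fin 2) (Polynomial ℝ) :=
  Matrix.of fun i p => if p = 0 then (if i ∈ S then 1 else 0) else (if i ∈ S then 0 else 1)

noncomputable def CP : Matrix (Fin 2) (Fin 2) (Polynomial ℝ) :=
  !![C r, -(2*C r); -(2*C r), C r]

lemma rank2_apply (i j : Fin N) :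
    (UP S * CP r * (UP S)ᵀ) i j =
      if i ∈ S then (if j ∈ S then C r else -(2*C r))
      else (if j ∈ S then -(2*C r) else C r) := by
  simp only [Matrix.mul_apply, Fin.sum_univ_two, Matrix.transpose_apply, UP, CP,
    Matrix.of_apply, Matrix.cons_val', Matrix.cons_val_zero, Matrix.cons_val_one,
    Matrix.head_cons, Matrix.head_fin_const, Matrix.empty_val', Matrix.cons_val_fin_one,
    if_pos rfl, one_ne_zero, if_neg]
  by_cases hiS : i ∈ S <;> by_cases hjS : j ∈ S <;> simp [hiS, hjS] <;> ring

lemma charm_eq :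
    charmatrix (r • modelM S) =
      Matrix.diagonal (fun i => if i ∈ S then aP r S else bP r S) + UP S * CP r * (UP S)ᵀ := by
  ext i j
  by_cases hij : i = j
  · subst hij
    rw [Matrix.add_apply, charmatrix_apply_eq, Matrix.diagonal_apply_eq, rank2_apply]
    have h1 : (r • modelM S) i i =
        r * ((if i ∈ S then 3*(S.card:ℝ) - 2*N else (N:ℝ) - 3*S.card) - 1) := by
      simp [modelM_diag]
    rw [h1]
    by_cases hiS : i ∈ S <;>
      · simp only [hiS, if_pos, if_neg, aP, bP, if_true, if_false]
        simp only [C_mul, C_sub, C_add, C_1, map_natCast, map_ofNat, C_neg]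
        ring
  · rw [Matrix.add_apply, charmatrix_apply_ne _ _ _ hij, Matrix.diagonal_apply_ne _ hij,
      rank2_apply]
    have h1 : (r • modelM S) i j = r * (if (i ∈ S ↔ j ∈ S) then -1 else 2) := by
      simp [modelM_off S hij]
    rw [h1]
    by_cases hiS : i ∈ S <;> by_cases hjS : j ∈ S <;>
      · simp only [hiS, hjS, iff_true, iff_false, if_true, if_false, if_pos, if_neg,
          not_true, not_false_iff, zero_add, true_iff, false_iff]
        simp only [C_mul, C_sub, C_add, C_1, map_ofNat, C_neg]
        ring

lemma det_key (hS0 : 0 < S.card) (hSN : S.card < N) :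
    (Matrix.diagonal (fun i => if i ∈ S then aP r S else bP r S)
      + UP S * CP r * (UP S)ᵀ).det =
    X * (X + C (2*r*N)) * bP r S ^ (N - S.card - 1) * aP r S ^ (S.card - 1) := by
  set K := RatFunc ℝ
  set φ : Polynomial ℝ →+* K := (algebraMap (Polynomial ℝ) K : Polynomial ℝ →+* K) with hφ
  have hinj : Function.Injective φ := RatFunc.algebraMap_injective ℝ
  apply hinj
  rw [RingHom.map_det, RingHom.mapMatrix_apply]
  set A : K := φ (aP r S) with hA'
  set B : K := φ (bP r S) with hB'
  set ρ : K := φ (C r) with hρ'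
  set x : K := φ X with hx'
  set dK : Fin N → K := fun i => if i ∈ S then A else B with hdK
  set UK : Matrix (Fin N) (Fin 2) K := (UP S).map φ with hUK
  have haP : aP r S ≠ 0 := by unfold aP; exact X_sub_C_ne_zero _
  have hbP : bP r S ≠ 0 := by unfold bP; exact X_sub_C_ne_zero _
  have hA : A ≠ 0 := by rw [hA']; exact (map_ne_zero_iff φ hinj).mpr haP
  have hB : B ≠ 0 := by rw [hB']; exact (map_ne_zero_iff φ hinj).mpr hbP
  have hd : ∀ i, dK i ≠ 0 := by intro i; by_cases h : i ∈ S <;> simp [hdK, h, hA, hB]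
  -- map the matrix
  have hmap : (Matrix.diagonal (fun i => if i ∈ S then aP r S else bP r S)
        + UP S * CP r * (UP S)ᵀ).map φ
      = Matrix.diagonal dK + UK * ((CP r).map φ) * UKᵀ := by
    have hφd : (fun i => φ (if i ∈ S then aP r S else bP r S)) = dK := by
      funext i; by_cases h : i ∈ S <;> simp [h, hdK, hA', hB']
    rw [Matrix.map_add _ (fun a b => map_add φ a b), Matrix.map_mul, Matrix.map_mul,
      Matrix.transpose_map, Matrix.diagonal_map (map_zero φ), hφd]
  rw [hmap]
  -- factor out the diagonal
  set Dinv : Matrix (Fin N) (Fin N) K := Matrix.diagonal (fun i => (dK i)⁻¹) with hDinv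
  have hfac : Matrix.diagonal dK + UK * ((CP r).map φ) * UKᵀ
      = Matrix.diagonal dK * (1 + Dinv * (UK * ((CP r).map φ) * UKᵀ)) := by
    rw [Matrix.mul_add, Matrix.mul_one, ← Matrix.mul_assoc, hDinv,
      Matrix.diagonal_mul_diagonal]
    have h1 : (fun i => dK i * (dK i)⁻¹) = fun _ : Fin N => (1:K) :=
      funext fun i => mul_inv_cancel₀ (hd i)
    rw [h1, Matrix.diagonal_one, Matrix.one_mul]
  rw [hfac, Matrix.det_mul, Matrix.det_diagonal]
  have hassoc : Dinv * (UK * ((CP r).map φ) * UKᵀ)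
      = (Dinv * UK * ((CP r).map φ)) * UKᵀ := by
    rw [← Matrix.mul_assoc, ← Matrix.mul_assoc]
  rw [hassoc, Matrix.det_one_add_mul_comm]
  have hassoc2 : UKᵀ * (Dinv * UK * ((CP r).map φ)) = (UKᵀ * (Dinv * UK)) * ((CP r).map φ) := by
    rw [← Matrix.mul_assoc]
  rw [hassoc2]
  -- compute the 2x2 Gram matrix
  have hUKa : ∀ i p, UK i p = if p = 0 then (if i ∈ S then (1:K) else 0)
      else (if i ∈ S then 0 else 1) := by
    intro i p
    by_cases hp : p = 0 <;> by_cases h : i ∈ S <;>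
      simp [hUK, UP, Matrix.map_apply, hp, h]
  have hG : UKᵀ * (Dinv * UK) =
      Matrix.of !![(S.card : K) * A⁻¹, 0; 0, ((N - S.card : ℕ) : K) * B⁻¹] := by
    have hDU : ∀ i q, (Dinv * UK) i q = (dK i)⁻¹ * UK i q := by
      intro i q; rw [hDinv, Matrix.diagonal_mul]
    have S00 : ∑ i, UK i 0 * ((dK i)⁻¹ * UK i 0) = (S.card : K) * A⁻¹ := by
      have h1 : ∀ i, UK i 0 * ((dK i)⁻¹ * UK i 0) = if i ∈ S then A⁻¹ else 0 := by
        intro i; by_cases h : i ∈ S <;> simp [hUKa, h, hdK]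
      simp only [h1]
      rw [Finset.sum_ite_mem, Finset.univ_inter, Finset.sum_const, nsmul_eq_mul]
    have S01 : ∑ i, UK i 0 * ((dK i)⁻¹ * UK i 1) = 0 := by
      refine Finset.sum_eq_zero fun i _ => ?_
      by_cases h : i ∈ S <;> simp [hUKa, h]
    have S10 : ∑ i, UK i 1 * ((dK i)⁻¹ * UK i 0) = 0 := by
      refine Finset.sum_eq_zero fun i _ => ?_
      by_cases h : i ∈ S <;> simp [hUKa, h]
    have S11 : ∑ i, UK i 1 * ((dK i)⁻¹ * UK i 1) = ((N - S.card : ℕ) : K) * B⁻¹ := by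
      have h1 : ∀ i, UK i 1 * ((dK i)⁻¹ * UK i 1) = if i ∈ Sᶜ then B⁻¹ else 0 := by
        intro i; by_cases h : i ∈ S <;> simp [hUKa, h, hdK]
      simp only [h1]
      rw [Finset.sum_ite_mem, Finset.univ_inter, Finset.sum_const, nsmul_eq_mul,
        Finset.card_compl, Fintype.card_fin]
    ext p q
    rw [Matrix.mul_apply]
    simp only [Matrix.transpose_apply, hDU]
    fin_cases p <;> fin_cases q <;>
      simp only [Fin.mk_zero, Fin.mk_one, Fin.isValue, S00, S01, S10, S11, Matrix.of_apply,
        Matrix.cons_val', Matrix.cons_val_zero, Matrix.cons_val_one, Matrix.head_cons,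
        Matrix.empty_val', Matrix.cons_val_fin_one, Matrix.head_fin_const] <;> rfl
  rw [hG]
  have hCK : (CP r).map φ = Matrix.of !![ρ, -(2*ρ); -(2*ρ), ρ] := by
    ext p q; fin_cases p <;> fin_cases q <;>
      simp [CP, Matrix.map_apply, hρ', map_neg, _root_.map_mul, map_ofNat] <;> rfl
  rw [hCK]
  -- the 2x2 determinant
  have hdet2 : (1 + Matrix.of !![(S.card : K) * A⁻¹, 0; 0, ((N - S.card : ℕ) : K) * B⁻¹] *
        Matrix.of !![ρ, -(2*ρ); -(2*ρ), ρ]).det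
      = (1 + (S.card : K)*A⁻¹*ρ) * (1 + ((N - S.card : ℕ) : K)*B⁻¹*ρ)
        - 4*(S.card : K)*((N - S.card : ℕ) : K)*A⁻¹*B⁻¹*ρ^2 := by
    rw [show (Matrix.of !![(S.card : K) * A⁻¹, 0; 0, ((N - S.card : ℕ) : K) * B⁻¹] :
        Matrix (Fin 2) (Fin 2) K) = !![(S.card : K) * A⁻¹, 0; 0, ((N - S.card : ℕ) : K) * B⁻¹]
        from rfl, show (Matrix.of !![ρ, -(2*ρ); -(2*ρ), ρ] : Matrix (Fin 2) (Fin 2) K) =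
        !![ρ, -(2*ρ); -(2*ρ), ρ] from rfl]
    rw [Matrix.det_fin_two]
    simp only [Matrix.add_apply, Matrix.one_apply, Matrix.mul_apply, Fin.sum_univ_two,
      Matrix.of_apply, Matrix.cons_val', Matrix.cons_val_zero, Matrix.cons_val_one,
      Matrix.head_cons, Matrix.empty_val', Matrix.cons_val_fin_one, Matrix.head_fin_const,
      if_pos rfl, Fin.isValue]
    norm_num
    ring
  rw [hdet2]
  -- the diagonal product
  have hprod : (∏ i, dK i) = A ^ S.card * B ^ (N - S.card) := by
    rw [hdK]
    rw [Finset.prod_ite (fun _ => A) (fun _ => B)]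
    rw [Finset.prod_const, Finset.prod_const]
    have h1 : Finset.univ.filter (fun i : Fin N => i ∈ S) = S := by ext; simp
    have h2 : Finset.univ.filter (fun i : Fin N => ¬ i ∈ S) = Sᶜ := by ext; simp
    rw [h1, h2, Finset.card_compl, Fintype.card_fin]
  rw [hprod]
  -- now pure field algebra
  have eρ : ∀ (t : ℝ), φ (C t) = RatFunc.C t := fun t => by
    simp [hφ, ← RatFunc.algebraMap_C]; rfl
  set VK : K := (S.card : K) with hVK
  set NK : K := (N : K) with hNK
  have e1 : A = x - ρ * (3*VK - 2*NK) := by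
    rw [hA', hx', hρ', hVK, hNK]
    rw [aP, _root_.map_sub]
    congr 1
    rw [show (C (r*(3*(S.card:ℝ) - 2*(N:ℝ))) : Polynomial ℝ)
        = C r * (3*((S.card : ℕ) : Polynomial ℝ) - 2*((N:ℕ) : Polynomial ℝ)) by
      simp only [C_mul, C_sub, map_ofNat, map_natCast]]
    simp only [_root_.map_mul, _root_.map_sub, map_natCast, map_ofNat]
  have e2 : B = x - ρ * (NK - 3*VK) := by
    rw [hB', hx', hρ', hVK, hNK]
    rw [bP, _root_.map_sub]
    congr 1
    rw [show (C (r*((N:ℝ) - 3*(S.card:ℝ))) : Polynomial ℝ)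
        = C r * (((N:ℕ) : Polynomial ℝ) - 3*((S.card : ℕ) : Polynomial ℝ)) by
      simp only [C_mul, C_sub, map_ofNat, map_natCast]]
    simp only [_root_.map_mul, _root_.map_sub, map_natCast, map_ofNat]
  -- RHS mapped
  simp only [_root_.map_mul, map_pow, _root_.map_add]
  rw [← hA', ← hB', ← hx']
  have eC : φ (C 2) * φ (C r) * φ (C ((N:ℕ):ℝ)) = 2 * ρ * NK := by
    rw [hρ', hNK]
    simp only [map_ofNat, map_natCast]
  rw [eC]
  have hWK : ((N - S.card : ℕ) : K) = NK - VK := by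
    rw [hVK, hNK, Nat.cast_sub hSN.le]
  rw [hWK]
  have hV : S.card - 1 + 1 = S.card := Nat.succ_pred_eq_of_pos hS0
  have hW : N - S.card - 1 + 1 = N - S.card := by omega
  have hpowA : A ^ S.card = A ^ (S.card - 1) * A := by rw [← pow_succ, hV]
  have hpowB : B ^ (N - S.card) = B ^ (N - S.card - 1) * B := by rw [← pow_succ, hW]
  rw [hpowA, hpowB]
  have key : A * B * ((1 + VK*A⁻¹*ρ) * (1 + (NK - VK)*B⁻¹*ρ)
      - 4*VK*(NK - VK)*A⁻¹*B⁻¹*ρ^2) = x * (x + 2*ρ*NK) := by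
    have h1 : A * B * ((1 + VK*A⁻¹*ρ) * (1 + (NK - VK)*B⁻¹*ρ)
        - 4*VK*(NK - VK)*A⁻¹*B⁻¹*ρ^2)
        = A*B + VK*ρ*B + (NK - VK)*ρ*A - 3*VK*(NK - VK)*ρ^2 := by
      have hAA : A * A⁻¹ = 1 := mul_inv_cancel₀ hA
      have hBB : B * B⁻¹ = 1 := mul_inv_cancel₀ hB
      linear_combination (A*(NK - VK)*ρ - 3*VK*(NK - VK)*ρ^2*(A*A⁻¹)) * hBB
        + (B*VK*ρ - 3*VK*(NK - VK)*ρ^2) * hAA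
    rw [h1, e1, e2]
    ring
  linear_combination (A ^ (S.card - 1) * B ^ (N - S.card - 1)) * key

end CharP

/-- spectrum of the Jacobian at a two-valued detailed-balance state on the
complete graph (as a characteristic polynomial factorization) and the resulting
stability/instability dichotomy for `N/3 < V < 2N/3` versus `V < N/3` or `V > 2N/3`. -/
theorem stmt_18 {N : ℕ} (r : ℝ) (hr : 0 < r) (S : Finset (Fin N))
    (hS0 : 0 < S.card) (hSN : S.card < N) :
    (Matrix.charpoly (r • (lapEq (⊤ : SimpleGraph (Fin N))
        (fun i => if i ∈ S then Real.sqrt r else 0) -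
      (2 : ℝ) • lapNe (⊤ : SimpleGraph (Fin N))
        (fun i => if i ∈ S then Real.sqrt r else 0))) =
      X * (X + C (2 * r * N)) *
        (X + C (3 * r * ((S.card : ℝ) - N / 3))) ^ (N - S.card - 1) *
        (X - C (3 * r * ((S.card : ℝ) - 2 * N / 3))) ^ (S.card - 1)) ∧
    ((N : ℝ) / 3 < S.card ∧ (S.card : ℝ) < 2 * N / 3 →
      NegDefOrth (r • (lapEq (⊤ : SimpleGraph (Fin N))
          (fun i => if i ∈ S then Real.sqrt r else 0) -
        (2 : ℝ) • lapNe (⊤ : SimpleGraph (Fin N))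
          (fun i => if i ∈ S then Real.sqrt r else 0)))) ∧
    ((S.card : ℝ) < (N : ℝ) / 3 ∨ 2 * (N : ℝ) / 3 < S.card →
      HasPosEig (r • (lapEq (⊤ : SimpleGraph (Fin N))
          (fun i => if i ∈ S then Real.sqrt r else 0) -
        (2 : ℝ) • lapNe (⊤ : SimpleGraph (Fin N))
          (fun i => if i ∈ S then Real.sqrt r else 0)))) := by
  rw [M0_eq hr S]
  refine ⟨?_, ?_, ?_⟩
  · -- characteristic polynomial
    have hbeq : (X : Polynomial ℝ) + C (3 * r * ((S.card : ℝ) - N / 3)) = bP r S := by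
      rw [show (3 * r * ((S.card : ℝ) - N / 3)) = -(r * ((N:ℝ) - 3 * S.card)) by ring,
        map_neg, ← sub_eq_add_neg, bP]
    have haeq : (X : Polynomial ℝ) - C (3 * r * ((S.card : ℝ) - 2 * N / 3)) = aP r S := by
      rw [show (3 * r * ((S.card : ℝ) - 2 * N / 3)) = r * (3 * S.card - 2 * N) by ring, aP]
    rw [Matrix.charpoly, charm_eq r S, det_key r S hS0 hSN, ← haeq, ← hbeq]
  · -- negative definiteness
    rintro ⟨h1, h2⟩ z hz hzsum
    rw [Matrix.smul_mulVec, dotProduct_smul, smul_eq_mul,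
      modelM_quadform S z hzsum]
    have hc1 : 3*(S.card:ℝ) - 2*N < 0 := by linarith
    have hc2 : (N:ℝ) - 3*S.card < 0 := by linarith
    obtain ⟨k0, hk0⟩ : ∃ k, z k ≠ 0 := by
      by_contra h; push_neg at h; exact hz (funext h)
    have hsum_lt : (∑ k, (if k ∈ S then 3*(S.card:ℝ) - 2*N else (N:ℝ) - 3*S.card) * z k ^ 2)
        < ∑ k : Fin N, (0:ℝ) := by
      refine Finset.sum_lt_sum (fun k _ => ?_) ⟨k0, Finset.mem_univ k0, ?_⟩
      · by_cases hk : k ∈ S <;>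
          simp only [hk, if_true, if_false] <;>
          nlinarith [sq_nonneg (z k)]
      · have hz2 : 0 < z k0 ^ 2 := by positivity
        by_cases hk : k0 ∈ S <;>
          simp only [hk, if_true, if_false] <;> nlinarith
    rw [Finset.sum_const_zero] at hsum_lt
    have hs2 : (0:ℝ) ≤ (∑ k ∈ S, z k) ^ 2 := sq_nonneg _
    apply mul_neg_of_pos_of_neg hr
    linarith
  · -- positive eigenvalue
    rintro (hlt | hgt)
    · have h3 : 3 * S.card < N := by
        have : 3 * (S.card : ℝ) < N := by linarith
        exact_mod_cast this
      have h2c : 1 < Sᶜ.card := by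
        rw [Finset.card_compl, Fintype.card_fin]; omega
      obtain ⟨i, hi, j, hj, hij⟩ := Finset.one_lt_card.mp h2c
      refine ⟨r * ((N:ℝ) - 3 * S.card), Pi.single i 1 - Pi.single j 1, ?_,
        pair_ne_zero hij, ?_⟩
      · apply mul_pos hr
        have : (3 * S.card : ℝ) < N := by exact_mod_cast h3
        linarith
      · rw [Matrix.smul_mulVec,
          modelM_pair_Sc S hij (Finset.mem_compl.mp hi) (Finset.mem_compl.mp hj), smul_smul]
    · have h3 : 2 * N < 3 * S.card := by
        have : 2 * (N : ℝ) < 3 * S.card := by linarith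
        exact_mod_cast this
      have h2c : 1 < S.card := by omega
      obtain ⟨i, hi, j, hj, hij⟩ := Finset.one_lt_card.mp h2c
      refine ⟨r * (3 * (S.card:ℝ) - 2 * N), Pi.single i 1 - Pi.single j 1, ?_,
        pair_ne_zero hij, ?_⟩
      · apply mul_pos hr
        have : (2 * N : ℝ) < 3 * S.card := by exact_mod_cast h3
        linarith
      · rw [Matrix.smul_mulVec, modelM_pair_S S hij hi hj, smul_smul]
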